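/- (Lemma 2) Let W be symmetric, doubly stochastic and positive definite, with 1 a simple eigenvalue and second-largest eigenvalue λ₂ ∈ (0,1). Suppose each ∇f_i is L_i-Lipschitz and set L_F^g = max_i L_i. Given α > 0, let x̂* be a local minimizer of Q_α (in particular ∇Q_α(x̂*) = 0) and let x̄* = (1/m) Σ_{j=1}^m x̂*_j. Then ‖∇f(x̄*)‖ ≤ α · L_F^g · m√m · ‖∇F(x̂*)‖ / (1 − λ₂). -/

import Mathlib

open scoped BigOperators RealInnerProductSpace
open Matrix MeasureTheory

noncomputable section

/-- The stacked space `(ℝⁿ)ᵐ ≅ ℝ^{mn}`. -/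
abbrev BigSpace (m n : ℕ) := EuclideanSpace ℝ (Fin m × Fin n)

/-- The `i`-th block component `x̂ᵢ ∈ ℝⁿ` of `x̂ ∈ ℝ^{mn}`. -/
def comp {m n : ℕ} (x : BigSpace m n) (i : Fin m) : EuclideanSpace ℝ (Fin n) :=
  WithLp.toLp 2 (fun j => x (i, j))

/-- `F(x̂) = Σᵢ fᵢ(x̂ᵢ)`. -/
def stackF {m n : ℕ} (f : Fin m → EuclideanSpace ℝ (Fin n) → ℝ) (x : BigSpace m n) : ℝ :=
  ∑ i, f i (comp x i)

/-- The action of `Ŵ = W ⊗ Iₙ` on `ℝ^{mn}`. -/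
def Wact {m n : ℕ} (W : Matrix (Fin m) (Fin m) ℝ) (x : BigSpace m n) : BigSpace m n :=
  WithLp.toLp 2 (fun p => ∑ k, W p.1 k * x (k, p.2))

/-- `W` is doubly stochastic: nonnegative entries, all row and column sums equal `1`. -/
def IsDoublyStochastic {m : ℕ} (W : Matrix (Fin m) (Fin m) ℝ) : Prop :=
  (∀ i j, 0 ≤ W i j) ∧ (∀ i, ∑ j, W i j = 1) ∧ (∀ j, ∑ i, W i j = 1)

/-- The auxiliary function `Q_α(x̂) = F(x̂) + (1/(2α)) x̂ᵀ(I_{mn} − Ŵ)x̂`. -/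
def Qaux {m n : ℕ} (f : Fin m → EuclideanSpace ℝ (Fin n) → ℝ)
    (W : Matrix (Fin m) (Fin m) ℝ) (α : ℝ) (x : BigSpace m n) : ℝ :=
  stackF f x + (1 / (2 * α)) * ⟪x, x - Wact W x⟫

/-- The Hessian quadratic form `vᵀ (∇²g(x)) v`, via the second iterated Fréchet derivative. -/
def hessQF {E : Type*} [NormedAddCommGroup E] [NormedSpace ℝ E]
    (g : E → ℝ) (x v : E) : ℝ :=
  iteratedFDeriv ℝ 2 g x ![v, v]


def compCLM (m n : ℕ) (i : Fin m) : BigSpace m n →L[ℝ] EuclideanSpace ℝ (Fin n) :=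
  LinearMap.toContinuousLinearMap
    { toFun := fun x => comp x i
      map_add' := by intro x y; ext j; simp [_root_.comp, PiLp.add_apply]
      map_smul' := by intro c x; ext j; simp [_root_.comp, PiLp.smul_apply] }

def WactCLM {m n : ℕ} (W : Matrix (Fin m) (Fin m) ℝ) : BigSpace m n →L[ℝ] BigSpace m n :=
  LinearMap.toContinuousLinearMap
    { toFun := Wact W
      map_add' := by
        intro x y; ext p; simp [Wact, mul_add, Finset.sum_add_distrib]
      map_smul' := by
        intro c x; ext p; simp [Wact, Finset.mul_sum]; ring_nf
        exact Finset.sum_congr rfl (fun k _ => by ring) }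

lemma inner_sum_eq {ι : Type*} [Fintype ι] (x y : EuclideanSpace ℝ ι) :
    ⟪x, y⟫ = ∑ k, x k * y k := by
  simp [PiLp.inner_apply, RCLike.inner_apply, mul_comm]

lemma gradient_inner {E : Type*} [NormedAddCommGroup E] [InnerProductSpace ℝ E]
    [CompleteSpace E] {g : E → ℝ} {x : E} (h : DifferentiableAt ℝ g x) (v : E) :
    fderiv ℝ g x v = ⟪gradient g x, v⟫ := by
  rw [gradient]
  have h2 := InnerProductSpace.toDual_apply_apply (𝕜 := ℝ) (E := E)
    (x := (InnerProductSpace.toDual ℝ E).symm (fderiv ℝ g x)) (y := v)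
  rw [LinearIsometryEquiv.apply_symm_apply] at h2
  exact h2

lemma symsum {m : ℕ} (W : Matrix (Fin m) (Fin m) ℝ) (hWsym : ∀ i k, W i k = W k i)
    (x y : Fin m → ℝ) :
    ∑ i, (∑ k, W i k * x k) * y i = ∑ k, x k * (∑ i, W k i * y i) := by
  calc ∑ i, (∑ k, W i k * x k) * y i = ∑ i, ∑ k, W k i * (x k * y i) := by
        refine Finset.sum_congr rfl fun i _ => ?_
        rw [Finset.sum_mul]
        exact Finset.sum_congr rfl fun k _ => by rw [hWsym i k]; ring
    _ = ∑ k, x k * ∑ i, W k i * y i := by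
        rw [Finset.sum_comm]
        refine Finset.sum_congr rfl fun k _ => ?_
        rw [Finset.mul_sum]
        exact Finset.sum_congr rfl fun i _ => by ring

lemma bsym {m n : ℕ} (W : Matrix (Fin m) (Fin m) ℝ) (hWsym : ∀ i k, W i k = W k i)
    (x y : BigSpace m n) : ⟪Wact W x, y⟫ = ⟪x, Wact W y⟫ := by
  rw [inner_sum_eq, inner_sum_eq]
  rw [Fintype.sum_prod_type, Fintype.sum_prod_type]
  rw [Finset.sum_comm, Finset.sum_comm (γ := Fin m)]
  refine Finset.sum_congr rfl fun j _ => ?_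
  exact symsum W hWsym (fun k => x (k, j)) (fun i => y (i, j))

lemma stationary {m n : ℕ} (f : Fin m → EuclideanSpace ℝ (Fin n) → ℝ)
    (hf : ∀ i, ContDiff ℝ 1 (f i))
    (W : Matrix (Fin m) (Fin m) ℝ) (hWsym : ∀ i k, W i k = W k i)
    (α : ℝ) (hα : 0 < α)
    (xstar : BigSpace m n) (hmin : IsLocalMin (Qaux f W α) xstar) :
    HasGradientAt (fun x => ∑ i, f i (comp x i))
      (WithLp.toLp 2 (fun p => gradient (f p.1) (comp xstar p.1) p.2 : Fin m × Fin n → ℝ) : BigSpace m n) xstar ∧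
    xstar - Wact W xstar =
      (-α) • (WithLp.toLp 2 (fun p => gradient (f p.1) (comp xstar p.1) p.2 : Fin m × Fin n → ℝ) : BigSpace m n) := by
  classical
  set G : BigSpace m n :=
    (WithLp.toLp 2 (fun p => gradient (f p.1) (comp xstar p.1) p.2 : Fin m × Fin n → ℝ) : BigSpace m n) with hG
  have hdiff : ∀ i z, DifferentiableAt ℝ (f i) z :=
    fun i z => ((hf i).differentiable one_ne_zero).differentiableAt
  -- derivative of the smooth part
  have hDi : ∀ i : Fin m, HasFDerivAt (fun x : BigSpace m n => f i (comp x i))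
      ((fderiv ℝ (f i) (comp xstar i)).comp (compCLM m n i)) xstar := by
    intro i
    exact ((hdiff i (comp xstar i)).hasFDerivAt).comp xstar ((compCLM m n i).hasFDerivAt)
  have hD : HasFDerivAt (fun x : BigSpace m n => ∑ i, f i (comp x i))
      (∑ i, (fderiv ℝ (f i) (comp xstar i)).comp (compCLM m n i)) xstar :=
    HasFDerivAt.fun_sum (fun i _ => hDi i)
  have hDeval : ∀ v : BigSpace m n,
      (∑ i, (fderiv ℝ (f i) (comp xstar i)).comp (compCLM m n i)) v = ⟪G, v⟫ := by
    intro v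
    rw [ContinuousLinearMap.sum_apply, inner_sum_eq, Fintype.sum_prod_type]
    refine Finset.sum_congr rfl fun i _ => ?_
    rw [ContinuousLinearMap.comp_apply, gradient_inner (hdiff i (comp xstar i)), inner_sum_eq]
    rfl
  -- derivative of the quadratic part
  have hid : HasFDerivAt (fun x : BigSpace m n => x) (ContinuousLinearMap.id ℝ _) xstar :=
    hasFDerivAt_id xstar
  have hsub : HasFDerivAt (fun x : BigSpace m n => x - Wact W x)
      (ContinuousLinearMap.id ℝ _ - WactCLM W) xstar :=
    hid.sub ((WactCLM W).hasFDerivAt)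
  have hq := HasFDerivAt.inner ℝ hid hsub
  have hQ : HasFDerivAt (Qaux f W α)
      ((∑ i, (fderiv ℝ (f i) (comp xstar i)).comp (compCLM m n i)) +
        (1 / (2 * α)) • ((fderivInnerCLM ℝ (xstar, xstar - Wact W xstar)).comp
          ((ContinuousLinearMap.id ℝ _).prod (ContinuousLinearMap.id ℝ _ - WactCLM W)))) xstar :=
    hD.add (hq.const_mul (1 / (2 * α)))
  have hzero := hmin.hasFDerivAt_eq_zero hQ
  have hv : ∀ v : BigSpace m n, ⟪G + α⁻¹ • (xstar - Wact W xstar), v⟫ = 0 := by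
    intro v
    have h0 := congrArg (fun (T : BigSpace m n →L[ℝ] ℝ) => T v) hzero
    simp only [ContinuousLinearMap.add_apply, ContinuousLinearMap.smul_apply,
      ContinuousLinearMap.comp_apply, ContinuousLinearMap.prod_apply,
      ContinuousLinearMap.zero_apply, ContinuousLinearMap.id_apply,
      ContinuousLinearMap.sub_apply, fderivInnerCLM_apply, smul_eq_mul] at h0
    rw [hDeval v] at h0
    have hsy : ⟪xstar, v - Wact W v⟫ = ⟪xstar - Wact W xstar, v⟫ := by
      rw [inner_sub_right, inner_sub_left, ← bsym W hWsym xstar v]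
    have hsy2 : ⟪v, xstar - Wact W xstar⟫ = ⟪xstar - Wact W xstar, v⟫ :=
      real_inner_comm _ _
    have hWc : (WactCLM W) v = Wact W v := rfl
    rw [hWc, hsy, hsy2] at h0
    rw [inner_add_left, real_inner_smul_left]
    have : (1 / (2 * α)) * (⟪xstar - Wact W xstar, v⟫ + ⟪xstar - Wact W xstar, v⟫)
        = α⁻¹ * ⟪xstar - Wact W xstar, v⟫ := by
      field_simp; ring
    linarith [h0, this]
  have hzv : G + α⁻¹ • (xstar - Wact W xstar) = 0 := by
    have := hv (G + α⁻¹ • (xstar - Wact W xstar))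
    rwa [inner_self_eq_zero] at this
  constructor
  · have hDG : (∑ i, (fderiv ℝ (f i) (comp xstar i)).comp (compCLM m n i))
        = InnerProductSpace.toDual ℝ (BigSpace m n) G := by
      refine ContinuousLinearMap.ext fun v => ?_
      rw [hDeval v, InnerProductSpace.toDual_apply_apply]
    rw [hDG] at hD
    exact hasGradientAt_iff_hasFDerivAt.2 hD
  · have h1 : α⁻¹ • (xstar - Wact W xstar) = -G := by
      exact eq_neg_of_add_eq_zero_left (by rw [add_comm]; exact hzv)
    have h2 := congrArg (fun z : BigSpace m n => α • z) h1
    simp only [smul_smul, mul_inv_cancel₀ (ne_of_gt hα), one_smul] at h2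
    rw [h2, neg_smul, smul_neg]

lemma euclid_sum_apply {ι κ : Type*} [Fintype ι] (v : ι → EuclideanSpace ℝ κ) (j : κ) :
    (∑ i, v i) j = ∑ i, v i j :=
  map_sum (AddMonoidHom.mk' (fun (w : EuclideanSpace ℝ κ) => w j) (fun _ _ => rfl)) v Finset.univ

lemma gradient_sum {m : ℕ} {E : Type*} [NormedAddCommGroup E] [InnerProductSpace ℝ E]
    [CompleteSpace E] (f : Fin m → E → ℝ) (z : E) (hdiff : ∀ i, DifferentiableAt ℝ (f i) z) :
    gradient (fun x => ∑ i, f i x) z = ∑ i, gradient (f i) z := by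
  unfold gradient
  rw [fderiv_fun_sum (fun i _ => hdiff i), map_sum]

lemma spec {m : ℕ} (hm : 0 < m) (W : Matrix (Fin m) (Fin m) ℝ) (hW : W.IsHermitian)
    (hone : ∃! i, hW.eigenvalues i = 1) (lam2 : ℝ) (hl2 : 0 < lam2)
    (hub : ∀ i, hW.eigenvalues i = 1 ∨ hW.eigenvalues i ≤ lam2)
    (hrow : ∀ i, ∑ j, W i j = 1)
    (u : EuclideanSpace ℝ (Fin m)) (hu : ∑ k, u k = 0) :
    ∑ i, (∑ k, W i k * u k) * u i ≤ lam2 * ∑ k, u k * u k := by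
  classical
  set b := hW.eigenvectorBasis with hb
  set lam := hW.eigenvalues with hlam
  set Wv : EuclideanSpace ℝ (Fin m) → EuclideanSpace ℝ (Fin m) :=
    fun v => WithLp.toLp 2 (fun i => ∑ k, W i k * v k : Fin m → ℝ) with hWv
  have happ : ∀ (v : EuclideanSpace ℝ (Fin m)) i, Wv v i = ∑ k, W i k * v k := fun _ _ => rfl
  have hWb : ∀ i, Wv (b i) = lam i • (b i) := by
    intro i
    have h := hW.mulVec_eigenvectorBasis i
    ext k
    have := congrFun h k
    simpa [Wv, Matrix.mulVec, dotProduct, PiLp.smul_apply, smul_eq_mul] using this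
  have hWentry : ∀ i k, W i k = W k i := by
    intro i k
    have := congrFun (congrFun hW k) i
    simpa [Matrix.conjTranspose_apply] using this
  have hsym : ∀ x y : EuclideanSpace ℝ (Fin m), ⟪Wv x, y⟫ = ⟪x, Wv y⟫ := by
    intro x y
    simp only [inner_sum_eq, happ]
    calc ∑ i, (∑ k, W i k * x k) * y i = ∑ i, ∑ k, W k i * (x k * y i) := by
          refine Finset.sum_congr rfl fun i _ => ?_
          rw [Finset.sum_mul]
          exact Finset.sum_congr rfl fun k _ => by rw [hWentry i k]; ring
      _ = ∑ k, x k * ∑ i, W k i * y i := by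
          rw [Finset.sum_comm]
          refine Finset.sum_congr rfl fun k _ => ?_
          rw [Finset.mul_sum]
          exact Finset.sum_congr rfl fun i _ => by ring
  -- coefficients of u in the eigenbasis
  set c : Fin m → ℝ := fun i => ⟪b i, u⟫ with hc
  have parseval : ∑ i, c i ^ 2 = ⟪u, u⟫ := by
    have := b.sum_inner_mul_inner u u
    calc ∑ i, c i ^ 2 = ∑ i, ⟪u, b i⟫ * ⟪b i, u⟫ := by
          refine Finset.sum_congr rfl fun i _ => ?_
          rw [hc, real_inner_comm (b i) u]; ring
      _ = ⟪u, u⟫ := this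
  have expand : ⟪Wv u, u⟫ = ∑ i, lam i * c i ^ 2 := by
    have h1 := b.sum_inner_mul_inner (Wv u) u
    rw [← h1]
    refine Finset.sum_congr rfl fun i _ => ?_
    have h2 : ⟪Wv u, b i⟫ = lam i * ⟪u, b i⟫ := by
      rw [hsym, hWb i, real_inner_smul_right]
    rw [h2, hc, real_inner_comm (b i) u]
    ring
  -- the coefficient along the eigenvalue-1 eigenvector vanishes
  obtain ⟨i0, hi0, huniq⟩ := hone
  set o : EuclideanSpace ℝ (Fin m) := WithLp.toLp 2 (fun _ => 1 : Fin m → ℝ) with ho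
  have hWo : Wv o = o := by
    ext i
    show ∑ k, W i k * (1:ℝ) = (1:ℝ)
    simpa using hrow i
  have hd : ∀ i, i ≠ i0 → ⟪b i, o⟫ = 0 := by
    intro i hi
    have h1 : ⟪Wv (b i), o⟫ = lam i * ⟪b i, o⟫ := by
      rw [hWb i, real_inner_smul_left]
    have h2 : ⟪Wv (b i), o⟫ = ⟪b i, o⟫ := by rw [hsym, hWo]
    have hne : lam i ≠ 1 := fun h => hi (huniq i h)
    have h3 : (lam i - 1) * ⟪b i, o⟫ = 0 := by
      have := h1.symm.trans h2
      ring_nf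
      linarith [this]
    rcases mul_eq_zero.1 h3 with h | h
    · exact absurd (by linarith : lam i = 1) hne
    · exact h
  have hoexp : o = ⟪b i0, o⟫ • b i0 := by
    have hrepr := b.sum_repr o
    calc o = ∑ i, ⟪b i, o⟫ • b i := by
          rw [show (∑ i, (⟪b i, o⟫:ℝ) • b i) = ∑ i, b.repr o i • b i from
            Finset.sum_congr rfl fun i _ => by rw [b.repr_apply_apply], hrepr]
      _ = ⟪b i0, o⟫ • b i0 := by
          rw [Finset.sum_eq_single i0]
          · intro i _ hi; rw [hd i hi, zero_smul]
          · intro h; exact absurd (Finset.mem_univ i0) h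
  have hci0 : c i0 = 0 := by
    have h1 : ⟪o, u⟫ = 0 := by
      rw [inner_sum_eq]
      simp only [ho]
      simpa using hu
    have h2 : ⟪o, u⟫ = ⟪b i0, o⟫ * c i0 := by
      conv_lhs => rw [hoexp]
      rw [real_inner_smul_left, hc]
    have h3 : ⟪b i0, o⟫ ≠ 0 := by
      intro hz
      have : o = 0 := by rw [hoexp, hz, zero_smul]
      have : (1:ℝ) = 0 := by
        have := congrFun (congrArg (fun (v : EuclideanSpace ℝ (Fin m)) => (v : Fin m → ℝ)) this) ⟨0, hm⟩
        simpa [ho] using this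
      norm_num at this
    have h4 := h1.symm.trans h2
    rcases mul_eq_zero.1 h4.symm with h | h
    · exact absurd h h3
    · exact h
  -- conclude
  have key : ∑ i, (∑ k, W i k * u k) * u i = ⟪Wv u, u⟫ := by
    rw [inner_sum_eq]
  have key2 : ∑ k, u k * u k = ⟪u, u⟫ := (inner_sum_eq u u).symm
  rw [key, key2, expand, ← parseval]
  rw [Finset.mul_sum]
  refine Finset.sum_le_sum fun i _ => ?_
  by_cases hii : i = i0
  · subst hii; rw [hci0]; simp
  · rcases hub i with h | h
    · exact absurd (huniq i h) hii
    · exact mul_le_mul_of_nonneg_right h (sq_nonneg _)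

set_option maxHeartbeats 1000000 in
/-- Lemma 2: under the hypotheses on `W` as before, with each `∇fᵢ`
`Lᵢ`-Lipschitz and `L_F^g = maxᵢ Lᵢ`, if `x̂*` is a local minimizer of `Q_α` and
`x̄* = (1/m) Σⱼ x̂*ⱼ`, then `‖∇f(x̄*)‖ ≤ α L_F^g m√m ‖∇F(x̂*)‖ / (1 − λ₂)`,
where `f = Σᵢ fᵢ`. -/
theorem stmt8 {m n : ℕ} (hm : 0 < m)
    (f : Fin m → EuclideanSpace ℝ (Fin n) → ℝ)
    (hf : ∀ i, ContDiff ℝ 1 (f i))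
    (L : Fin m → ℝ)
    (hLip : ∀ i x y, ‖gradient (f i) x - gradient (f i) y‖ ≤ L i * ‖x - y‖)
    (W : Matrix (Fin m) (Fin m) ℝ) (hW : W.IsHermitian)
    (hds : IsDoublyStochastic W) (hpd : W.PosDef)
    (hsimple : ∃! i, hW.eigenvalues i = 1)
    (lam2 : ℝ) (hlam2_pos : 0 < lam2) (hlam2_lt : lam2 < 1)
    (hub : ∀ i, hW.eigenvalues i = 1 ∨ hW.eigenvalues i ≤ lam2)
    (hmem : ∃ i, hW.eigenvalues i ≠ 1 ∧ hW.eigenvalues i = lam2)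
    (α : ℝ) (hα : 0 < α)
    (xstar : BigSpace m n) (hmin : IsLocalMin (Qaux f W α) xstar) :
    ‖gradient (fun x => ∑ i, f i x) ((m : ℝ)⁻¹ • ∑ j, comp xstar j)‖ ≤
      α * (⨆ i, L i) * ((m : ℝ) * Real.sqrt m) * ‖gradient (stackF f) xstar‖ / (1 - lam2) := by
  classical
  have hlt : (0:ℝ) < 1 - lam2 := by linarith
  set ML : ℝ := ⨆ i, L i with hML
  have hLle : ∀ i, L i ≤ ML := fun i => le_ciSup (Set.Finite.bddAbove (Set.finite_range L)) i
  by_cases hML0 : 0 ≤ ML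
  swap
  · -- then necessarily n = 0 and both sides are zero
    push_neg at hML0
    have hn : n = 0 := by
      by_contra hn
      have hnpos : 0 < n := Nat.pos_of_ne_zero hn
      set i : Fin m := ⟨0, hm⟩
      set x : EuclideanSpace ℝ (Fin n) := EuclideanSpace.single ⟨0, hnpos⟩ (1:ℝ) with hx
      have h1 := hLip i x 0
      have h2 : ‖x - 0‖ = 1 := by
        rw [sub_zero, hx, EuclideanSpace.norm_single]; norm_num
      rw [h2, mul_one] at h1
      have : 0 ≤ L i := le_trans (norm_nonneg _) h1
      linarith [hLle i]
    subst hn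
    haveI hsub1 : Subsingleton (EuclideanSpace ℝ (Fin 0)) :=
      ⟨fun a b => PiLp.ext fun j => j.elim0⟩
    haveI hsub2 : Subsingleton (BigSpace m 0) :=
      ⟨fun a b => PiLp.ext fun p => p.2.elim0⟩
    have e1 : ‖gradient (fun x => ∑ i, f i x) ((m : ℝ)⁻¹ • ∑ j, comp xstar j)‖ = 0 := by
      rw [Subsingleton.elim (gradient (fun x => ∑ i, f i x) ((m : ℝ)⁻¹ • ∑ j, comp xstar j))
        (0 : EuclideanSpace ℝ (Fin 0)), norm_zero]
    have e2 : ‖gradient (stackF f) xstar‖ = 0 := by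
      rw [Subsingleton.elim (gradient (stackF f) xstar) (0 : BigSpace m 0), norm_zero]
    rw [e1, e2]
    simp
  -- main case
  have hWsym : ∀ i k, W i k = W k i := by
    intro i k
    have := congrFun (congrFun hW k) i
    simpa [Matrix.conjTranspose_apply] using this
  obtain ⟨hgrad, hE⟩ := stationary f hf W hWsym α hα xstar hmin
  set G : BigSpace m n :=
    (WithLp.toLp 2 (fun p => gradient (f p.1) (comp xstar p.1) p.2 : Fin m × Fin n → ℝ) : BigSpace m n) with hG
  have hGnorm : ‖gradient (stackF f) xstar‖ = ‖G‖ := by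
    have h1 : gradient (stackF f) xstar = G := hgrad.gradient
    rw [h1]
  have hdiff : ∀ i z, DifferentiableAt ℝ (f i) z :=
    fun i z => ((hf i).differentiable one_ne_zero).differentiableAt
  set xbar : EuclideanSpace ℝ (Fin n) := (m : ℝ)⁻¹ • ∑ j, comp xstar j with hxbar
  have hxbarj : ∀ j : Fin n, xbar j = (m:ℝ)⁻¹ * ∑ i, xstar (i, j) := by
    intro j
    rw [hxbar, PiLp.smul_apply, euclid_sum_apply, smul_eq_mul]
    rfl
  set y : BigSpace m n := (WithLp.toLp 2 (fun p => xstar p - xbar p.2 : Fin m × Fin n → ℝ) : BigSpace m n)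
    with hy
  have hm0 : (m:ℝ) ≠ 0 := Nat.cast_ne_zero.2 hm.ne'
  have hyzero : ∀ j, ∑ i, y (i, j) = 0 := by
    intro j
    have h0 : ∀ i : Fin m, y (i, j) = xstar (i, j) - xbar j := fun _ => rfl
    rw [Finset.sum_congr rfl fun i _ => h0 i, Finset.sum_sub_distrib, Finset.sum_const,
      Finset.card_univ, Fintype.card_fin, nsmul_eq_mul, hxbarj j]
    field_simp
    ring
  have hyWy : y - Wact W y = xstar - Wact W xstar := by
    ext p
    have h1 : ∑ k, W p.1 k * y (k, p.2)
        = (∑ k, W p.1 k * xstar (k, p.2)) - xbar p.2 := by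
      have : ∀ k, W p.1 k * y (k, p.2) = W p.1 k * xstar (k, p.2) - W p.1 k * xbar p.2 := by
        intro k; show W p.1 k * (xstar (k, p.2) - xbar p.2) = _; ring
      rw [Finset.sum_congr rfl (fun k _ => this k), Finset.sum_sub_distrib,
        ← Finset.sum_mul, hds.2.1 p.1, one_mul]
    show y p - Wact W y p = xstar p - Wact W xstar p
    rw [show Wact W y p = ∑ k, W p.1 k * y (k, p.2) from rfl, h1]
    show (xstar p - xbar p.2) - _ = xstar p - Wact W xstar p
    rw [show Wact W xstar p = ∑ k, W p.1 k * xstar (k, p.2) from rfl]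
    ring
  -- spectral bound
  have hspec : ⟪Wact W y, y⟫ ≤ lam2 * ⟪y, y⟫ := by
    rw [inner_sum_eq, inner_sum_eq, Fintype.sum_prod_type, Fintype.sum_prod_type,
      Finset.sum_comm, Finset.sum_comm (γ := Fin m), Finset.mul_sum]
    refine Finset.sum_le_sum fun j _ => ?_
    exact spec hm W hW hsimple lam2 hlam2_pos hub hds.2.1
      (WithLp.toLp 2 (fun k => y (k, j) : Fin m → ℝ) : EuclideanSpace ℝ (Fin m)) (hyzero j)
  have hyn : ‖y‖ ≤ α * ‖G‖ / (1 - lam2) := by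
    have h1 : (1 - lam2) * ‖y‖^2 ≤ α * ‖G‖ * ‖y‖ := by
      have h2 : ⟪y - Wact W y, y⟫ = ⟪y, y⟫ - ⟪Wact W y, y⟫ := by
        rw [inner_sub_left]
      have h3 : ⟪y - Wact W y, y⟫ = (-α) * ⟪G, y⟫ := by
        rw [hyWy, hE, real_inner_smul_left]
      have h4 : (-α) * ⟪G, y⟫ ≤ α * (‖G‖ * ‖y‖) := by
        have := real_inner_le_norm (-G) y
        rw [inner_neg_left, norm_neg] at this
        nlinarith [this]
      have h5 : ⟪y, y⟫ = ‖y‖^2 := real_inner_self_eq_norm_sq y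
      nlinarith [h2, h3, h4, hspec]
    rcases eq_or_lt_of_le (norm_nonneg y) with h | h
    · rw [← h]
      positivity
    · rw [le_div_iff₀ hlt]
      nlinarith [h1, h]
  -- the block gradients sum to zero
  have hsumG : ∀ j, ∑ i, G (i, j) = 0 := by
    intro j
    have h1 : ∑ i, (xstar (i,j) - Wact W xstar (i,j)) = 0 := by
      have : ∀ i : Fin m, xstar (i,j) - Wact W xstar (i,j)
          = xstar (i,j) - ∑ k, W i k * xstar (k,j) := fun i => rfl
      rw [Finset.sum_congr rfl fun i _ => this i, Finset.sum_sub_distrib, Finset.sum_comm]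
      have : ∀ k : Fin m, ∑ i, W i k * xstar (k, j) = xstar (k, j) := by
        intro k
        rw [← Finset.sum_mul, hds.2.2 k, one_mul]
      rw [Finset.sum_congr rfl fun k _ => this k, sub_self]
    have h2 : ∀ i : Fin m, xstar (i,j) - Wact W xstar (i,j) = -α * G (i,j) := by
      intro i
      have := congrFun (congrArg WithLp.ofLp hE) (i, j)
      simpa [PiLp.sub_apply, PiLp.smul_apply, smul_eq_mul] using this
    rw [Finset.sum_congr rfl fun i _ => h2 i, ← Finset.mul_sum] at h1
    rcases mul_eq_zero.1 h1 with h | h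
    · exact absurd (by linarith : α = 0) (ne_of_gt hα)
    · exact h
  have hsumg : ∑ i, gradient (f i) (comp xstar i) = (0 : EuclideanSpace ℝ (Fin n)) := by
    ext j
    rw [euclid_sum_apply]
    exact hsumG j
  -- Cauchy-Schwarz for the consensus error
  set a : Fin m → ℝ := fun i => ‖xbar - comp xstar i‖ with ha
  have hay : ∑ i, (a i)^2 = ‖y‖^2 := by
    have h1 : ∀ i, (a i)^2 = ∑ j, (y (i,j))^2 := by
      intro i
      rw [ha]
      rw [← real_inner_self_eq_norm_sq, inner_sum_eq]
      refine Finset.sum_congr rfl fun j _ => ?_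
      have : (xbar - comp xstar i) j = xbar j - xstar (i, j) := rfl
      rw [this]
      have : y (i, j) = xstar (i,j) - xbar j := rfl
      rw [this]
      ring
    rw [Finset.sum_congr rfl fun i _ => h1 i, ← real_inner_self_eq_norm_sq y, inner_sum_eq,
      Fintype.sum_prod_type]
    exact Finset.sum_congr rfl fun i _ => Finset.sum_congr rfl fun j _ => by ring
  have hcs : ∑ i, a i ≤ Real.sqrt m * ‖y‖ := by
    have h1 : (∑ i, a i)^2 ≤ (m : ℝ) * ∑ i, (a i)^2 := by
      have := sq_sum_le_card_mul_sum_sq (s := (Finset.univ : Finset (Fin m))) (f := a)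
      simpa using this
    have h2 : (∑ i, a i)^2 ≤ ((Real.sqrt m) * ‖y‖)^2 :=
      calc (∑ i, a i)^2 ≤ (m:ℝ) * ∑ i, (a i)^2 := h1
        _ = ((Real.sqrt m) * ‖y‖)^2 := by
            rw [hay, mul_pow, Real.sq_sqrt (Nat.cast_nonneg m)]
    have h3 : 0 ≤ ∑ i, a i := Finset.sum_nonneg fun i _ => norm_nonneg _
    have h4 : 0 ≤ Real.sqrt m * ‖y‖ := by positivity
    have h5 := Real.sqrt_le_sqrt h2
    rwa [Real.sqrt_sq h3, Real.sqrt_sq h4] at h5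
  -- final chain
  have hgsum : gradient (fun x => ∑ i, f i x) xbar = ∑ i, gradient (f i) xbar :=
    gradient_sum f xbar (fun i => hdiff i xbar)
  have hchain : ‖gradient (fun x => ∑ i, f i x) xbar‖ ≤ ML * (∑ i, a i) := by
    rw [hgsum]
    have h1 : (∑ i, gradient (f i) xbar)
        = ∑ i, (gradient (f i) xbar - gradient (f i) (comp xstar i)) := by
      rw [Finset.sum_sub_distrib, hsumg, sub_zero]
    rw [h1]
    calc ‖∑ i, (gradient (f i) xbar - gradient (f i) (comp xstar i))‖
        ≤ ∑ i, ‖gradient (f i) xbar - gradient (f i) (comp xstar i)‖ :=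
          norm_sum_le _ _
      _ ≤ ∑ i, ML * a i := by
          refine Finset.sum_le_sum fun i _ => ?_
          calc ‖gradient (f i) xbar - gradient (f i) (comp xstar i)‖
              ≤ L i * ‖xbar - comp xstar i‖ := hLip i xbar (comp xstar i)
            _ ≤ ML * a i := by
                rw [ha]
                exact mul_le_mul_of_nonneg_right (hLle i) (norm_nonneg _)
      _ = ML * (∑ i, a i) := by rw [Finset.mul_sum]
  have hGn : (0:ℝ) ≤ ‖G‖ := norm_nonneg G
  have hsq : Real.sqrt m ≤ (m:ℝ) * Real.sqrt m := by
    have h1 : (1:ℝ) ≤ (m:ℝ) := by exact_mod_cast hm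
    nlinarith [Real.sqrt_nonneg (m:ℝ)]
  calc ‖gradient (fun x => ∑ i, f i x) xbar‖
      ≤ ML * (∑ i, a i) := hchain
    _ ≤ ML * (Real.sqrt m * ‖y‖) := mul_le_mul_of_nonneg_left hcs hML0
    _ ≤ ML * (Real.sqrt m * (α * ‖G‖ / (1 - lam2))) := by
        refine mul_le_mul_of_nonneg_left ?_ hML0
        exact mul_le_mul_of_nonneg_left hyn (Real.sqrt_nonneg _)
    _ ≤ ML * ((m:ℝ) * Real.sqrt m * (α * ‖G‖ / (1 - lam2))) := by
        refine mul_le_mul_of_nonneg_left ?_ hML0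
        refine mul_le_mul_of_nonneg_right hsq ?_
        positivity
    _ = α * ML * ((m : ℝ) * Real.sqrt m) * ‖G‖ / (1 - lam2) := by
        field_simp
    _ = α * ML * ((m : ℝ) * Real.sqrt m) * ‖gradient (stackF f) xstar‖ / (1 - lam2) := by
        rw [hGnorm]
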